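/- There is no pair (λ, ν) ∈ [0,∞)⁴ × [0,∞)⁴ with λ_{j₀} ≠ λ_{j₀+2} for some j₀ ∈ {0,1} satisfying the system: for every j ∈ {0,1,2,3} (indices taken modulo 4), −λ_j·log(λ_j) + (9/10)·λ_j − (2/5)·(λ_{j+1} + λ_{j+3}) − (1/10)·λ_{j+2} − ν_j = 0; 0 < ∑_{k=0}^{3} λ_k² < 4; and λ_j·ν_j = 0 for every j ∈ {0,1,2,3}. -/

import Mathlib

open scoped BigOperators

lemma log_upper (n : ℕ) {x : ℝ} (h0 : 0 ≤ x) (h1 : x < 1) :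
    -Real.log (1 - x) ≤ (∑ i ∈ Finset.range n, x ^ (i + 1) / (i + 1))
      + x ^ (n + 1) / ((n + 1) * (1 - x)) := by
  have habs : |x| < 1 := by rwa [abs_of_nonneg h0]
  have hs := Real.hasSum_pow_div_log_of_abs_lt_one habs
  have hsum := hs.summable
  have hx1 : (0:ℝ) < 1 - x := by linarith
  have hn1 : (0:ℝ) < (n:ℝ) + 1 := by positivity
  have hsplit := Summable.sum_add_tsum_nat_add (f := fun m : ℕ => x ^ (m + 1) / (m + 1)) n hsum
  rw [hs.tsum_eq] at hsplit
  push_cast at hsplit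
  have hgeo : Summable (fun i : ℕ => x ^ (n + 1) / (n + 1) * x ^ i) :=
    (summable_geometric_of_lt_one h0 h1).mul_left _
  have htail : (∑' i : ℕ, x ^ (i + n + 1) / ((i:ℝ) + n + 1)) ≤ x ^ (n + 1) / ((n + 1) * (1 - x)) := by
    have hb : ∀ i : ℕ, x ^ (i + n + 1) / ((i:ℝ) + n + 1) ≤ x ^ (n + 1) / (n + 1) * x ^ i := by
      intro i
      rw [div_mul_eq_mul_div, show x ^ (n+1) * x ^ i = x ^ (i + n + 1) by ring]
      apply div_le_div_of_nonneg_left ?_ ?_ ?_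
      · positivity
      · positivity
      · linarith [Nat.cast_nonneg (α := ℝ) i]
    calc (∑' i : ℕ, x ^ (i + n + 1) / ((i:ℝ) + n + 1))
        ≤ ∑' i : ℕ, x ^ (n + 1) / (n + 1) * x ^ i := by
          apply Summable.tsum_le_tsum hb ?_ hgeo
          have h2 := (summable_nat_add_iff (f := fun m : ℕ => x ^ (m + 1) / (m + 1)) n).2 hsum
          apply h2.congr
          intro i
          push_cast
          ring_nf
      _ = x ^ (n + 1) / (n + 1) * (1 - x)⁻¹ := by
          rw [tsum_mul_left, tsum_geometric_of_lt_one h0 h1]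
      _ = x ^ (n + 1) / ((n + 1) * (1 - x)) := by
          field_simp
  linarith [hsplit, htail]

lemma log_lower (n : ℕ) {x : ℝ} (h0 : 0 ≤ x) (h1 : x < 1) :
    (∑ i ∈ Finset.range n, x ^ (i + 1) / (i + 1)) ≤ -Real.log (1 - x) := by
  have habs : |x| < 1 := by rwa [abs_of_nonneg h0]
  have hs := Real.hasSum_pow_div_log_of_abs_lt_one habs
  rw [← hs.tsum_eq]
  apply Summable.sum_le_tsum _ (fun i _ => by positivity) hs.summable



lemma g_le_one {x : ℝ} (hx : 0 < x) : x * (1 - Real.log x) ≤ 1 := by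
  have h := Real.log_le_sub_one_of_pos (show 0 < x⁻¹ by positivity)
  rw [Real.log_inv] at h
  have hinv : x * x⁻¹ = 1 := mul_inv_cancel₀ hx.ne'
  nlinarith [mul_le_mul_of_nonneg_left h hx.le]

lemma g_quad {b : ℝ} (h0 : 0 < b) (h1 : b < 1) : b * (1 - Real.log b) ≤ 1 - (1 - b) ^ 2 / 2 := by
  have h := log_upper 1 (x := 1 - b) (by linarith) (by linarith)
  rw [show (1:ℝ) - (1 - b) = b by ring] at h
  simp only [Finset.sum_range_succ, Finset.sum_range_zero] at h
  norm_num at h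
  -- h : -Real.log b ≤ (1-b) + (1-b)^2/(2*b)
  have hcan : b * ((1 - b) ^ 2 / (2 * b)) = (1 - b) ^ 2 / 2 := by field_simp
  nlinarith [mul_le_mul_of_nonneg_left h h0.le]

lemma p_up {a : ℝ} (h0 : 0 < a) (h1 : a < 1) :
    1 - (1-a)^2/2 - (1-a)^3/6 - (1-a)^4/3 ≤ a * (1 - Real.log a) := by
  have h := log_lower 3 (x := 1 - a) (by linarith) (by linarith)
  rw [show (1:ℝ) - (1 - a) = a by ring] at h
  simp only [Finset.sum_range_succ, Finset.sum_range_zero] at h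
  norm_num at h
  -- h : (1-a) + (1-a)^2/2 + (1-a)^3/3 ≤ -Real.log a
  nlinarith [mul_le_mul_of_nonneg_left h h0.le]

lemma g_anti {x y : ℝ} (hx : 1 ≤ x) (hxy : x < y) :
    y * (1 - Real.log y) < x * (1 - Real.log x) := by
  have hx0 : 0 < x := by linarith
  have hy0 : 0 < y := by linarith
  have hne : x / y ≠ 1 := by
    intro h
    have : x = y := by field_simp at h; linarith
    linarith
  have h1 : Real.log (x / y) < x / y - 1 := Real.log_lt_sub_one_of_pos (by positivity) hne
  rw [Real.log_div hx0.ne' hy0.ne'] at h1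
  have h2 : 0 ≤ Real.log x := Real.log_nonneg hx
  have hq : y * (x / y) = x := by field_simp
  nlinarith [mul_lt_mul_of_pos_left h1 hy0, mul_nonneg (sub_nonneg.2 hxy.le) h2]

lemma g_mono {x y : ℝ} (hx : 0 < x) (hxy : x < y) (hy : y ≤ 1) :
    x * (1 - Real.log x) < y * (1 - Real.log y) := by
  have hy0 : 0 < y := by linarith
  have hne : y / x ≠ 1 := by
    intro h
    have : y = x := by field_simp at h; linarith
    linarith
  have h1 : Real.log (y / x) < y / x - 1 := Real.log_lt_sub_one_of_pos (by positivity) hne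
  rw [Real.log_div hy0.ne' hx.ne'] at h1
  have h2 : Real.log y ≤ 0 := Real.log_nonpos hy0.le hy
  have hq : x * (y / x) = y := by field_simp
  nlinarith [mul_lt_mul_of_pos_left h1 hx, mul_nonpos_of_nonneg_of_nonpos (sub_nonneg.2 hxy.le) h2]


lemma Wbound {v : ℝ} (hv : 0 ≤ v) :
    Real.log (1 + v) ≤ (1*v + (19/2)*v^2 + (121/3)*v^3 + (1207/12)*v^4 + (1627/10)*v^5 + (2131/12)*v^6 + (2761/21)*v^7 + (3601/56)*v^8 + (4861/252)*v^9 + (7381/2520)*v^10 + (1/11)*v^11) / (1 + v) ^ 10 := by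
  have hu : (0:ℝ) < 1 + v := by linarith
  have h0x : 0 ≤ v / (1 + v) := by positivity
  have h1x : v / (1 + v) < 1 := by rw [div_lt_one hu]; linarith
  have h := log_upper 10 h0x h1x
  have h1mx : 1 - v / (1 + v) = 1 / (1 + v) := by field_simp; ring
  rw [h1mx, one_div, Real.log_inv, neg_neg] at h
  refine h.trans (le_of_eq ?_)
  simp only [Finset.sum_range_succ, Finset.sum_range_zero]
  push_cast
  field_simp
  ring

lemma Ebound {s : ℝ} (h0 : 0 ≤ s) (h1 : s < 1) :
    (1 - s) * (1 - Real.log (1 - s)) ≤ 1 + (-1/2)*s^2 + (-1/6)*s^3 + (-1/12)*s^4 + (-1/20)*s^5 + (-1/30)*s^6 + (-1/42)*s^7 + (-1/56)*s^8 + (-1/72)*s^9 := by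
  have h := log_upper 8 h0 h1
  have hs : (0:ℝ) < 1 - s := by linarith
  have key : (1 - s) * (1 - Real.log (1-s)) ≤ (1-s) * (1 + ((∑ i ∈ Finset.range 8, s ^ (i + 1) / (i + 1)) + s ^ (8 + 1) / ((8 + 1) * (1 - s)))) := by
    nlinarith [mul_le_mul_of_nonneg_left h hs.le]
  refine key.trans (le_of_eq ?_)
  simp only [Finset.sum_range_succ, Finset.sum_range_zero]
  push_cast
  field_simp
  ring

set_option maxHeartbeats 3200000 in
lemma master {s : ℝ} (h0 : 0 ≤ s) (h1 : s < 1) :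
    (1 - s) * (1 - Real.log (1 - s))
      ≤ (1 + (s + s^2/3 + s^3/9)) * (1 - Real.log (1 + (s + s^2/3 + s^3/9))) := by
  set v : ℝ := s + s^2/3 + s^3/9 with hvdef
  have hv : 0 ≤ v := by
    have h2 : 0 ≤ s^2 := sq_nonneg s
    have h3 : 0 ≤ s^3 := by positivity
    simp only [hvdef]; linarith
  have hu : (0:ℝ) < 1 + v := by linarith
  have hW := Wbound hv
  have hE := Ebound h0 h1
  have hP : (0:ℝ) ≤ (17/270)*s^5 + (107/180)*s^6 + (1033/378)*s^7 + (55843/6804)*s^8 + (5580397/306180)*s^9 + (3930637/122472)*s^10 + (473652161/10103940)*s^11 + (161388937/2755620)*s^12 + (19580549/306180)*s^13 + (341495731/5511240)*s^14 + (4121162/76545)*s^15 + (58218229/1377810)*s^16 + (746385679/24800580)*s^17 + (1742104807/89282088)*s^18 + (2574994531/223205220)*s^19 + (208434326/33480783)*s^20 + (6160885951/2008846980)*s^21 + (6769917571/4910514840)*s^22 + (567450557/1004423490)*s^23 + (141079471/669615660)*s^24 + (28659431/401769396)*s^25 + (790218883/36159245640)*s^26 + (2944203637/488149816140)*s^27 +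 (103950727/69735688020)*s^28 + (95866091/292889889684)*s^29 + (555083387/8786696690520)*s^30 + (61369/5811307335)*s^31 + (4384547/2928898896840)*s^32 + (300856/1725958278495)*s^33 + (515/32543321076)*s^34 + (11/10847773692)*s^35 + (1/27894275208)*s^36 := by
    have hnn : ∀ k : ℕ, 0 ≤ s ^ k := fun k => pow_nonneg h0 k
    repeat' apply add_nonneg
    all_goals exact mul_nonneg (by norm_num) (hnn _)
  have hid : ((1 + v) - (1 + (-1/2)*s^2 + (-1/6)*s^3 + (-1/12)*s^4 + (-1/20)*s^5 + (-1/30)*s^6 + (-1/42)*s^7 + (-1/56)*s^8 + (-1/72)*s^9)) * (1 + v) ^ 9 - (1*v + (19/2)*v^2 + (121/3)*v^3 + (1207/12)*v^4 + (1627/10)*v^5 + (2131/12)*v^6 + (2761/21)*v^7 + (3601/56)*v^8 + (4861/252)*v^9 + (7381/2520)*v^10 + (1/11)*v^11)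
      = (17/270)*s^5 + (107/180)*s^6 + (1033/378)*s^7 + (55843/6804)*s^8 + (5580397/306180)*s^9 + (3930637/122472)*s^10 + (473652161/10103940)*s^11 + (161388937/2755620)*s^12 + (19580549/306180)*s^13 + (341495731/5511240)*s^14 + (4121162/76545)*s^15 + (58218229/1377810)*s^16 + (746385679/24800580)*s^17 + (1742104807/89282088)*s^18 + (2574994531/223205220)*s^19 + (208434326/33480783)*s^20 + (6160885951/2008846980)*s^21 + (6769917571/4910514840)*s^22 + (567450557/1004423490)*s^23 + (141079471/669615660)*s^24 + (28659431/401769396)*s^25 + (790218883/36159245640)*s^26 + (2944203637/488149816140)*s^27 + (103950727/69735688020)*s^28 + (95866091/292889889684)*s^29 + (555083387/8786696690520)*s^30 + (61369/5811307335)*s^31 + (4384547/2928898896840)*s^32 + (300856/1725958278495)*s^33 + (515/32543321076)*s^34 + (11/10847773692)*s^35 + (1/27894275208)*s^36 := by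
    simp only [hvdef]
    ring
  have h9 : (0:ℝ) < (1 + v) ^ 9 := by positivity
  have h2 : (1*v + (19/2)*v^2 + (121/3)*v^3 + (1207/12)*v^4 + (1627/10)*v^5 + (2131/12)*v^6 + (2761/21)*v^7 + (3601/56)*v^8 + (4861/252)*v^9 + (7381/2520)*v^10 + (1/11)*v^11) ≤ ((1 + v) - (1 + (-1/2)*s^2 + (-1/6)*s^3 + (-1/12)*s^4 + (-1/20)*s^5 + (-1/30)*s^6 + (-1/42)*s^7 + (-1/56)*s^8 + (-1/72)*s^9)) * (1 + v) ^ 9 := by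
    linarith [hP, hid]
  have h3 := (div_le_iff₀ h9).2 h2
  have hstep : (1 + (-1/2)*s^2 + (-1/6)*s^3 + (-1/12)*s^4 + (-1/20)*s^5 + (-1/30)*s^6 + (-1/42)*s^7 + (-1/56)*s^8 + (-1/72)*s^9) ≤ (1 + v) - (1*v + (19/2)*v^2 + (121/3)*v^3 + (1207/12)*v^4 + (1627/10)*v^5 + (2131/12)*v^6 + (2761/21)*v^7 + (3601/56)*v^8 + (4861/252)*v^9 + (7381/2520)*v^10 + (1/11)*v^11) / (1 + v) ^ 9 := by linarith [h3]
  have hfs : (1 + v) - (1*v + (19/2)*v^2 + (121/3)*v^3 + (1207/12)*v^4 + (1627/10)*v^5 + (2131/12)*v^6 + (2761/21)*v^7 + (3601/56)*v^8 + (4861/252)*v^9 + (7381/2520)*v^10 + (1/11)*v^11) / (1 + v) ^ 9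
      = (1 + v) * (1 - (1*v + (19/2)*v^2 + (121/3)*v^3 + (1207/12)*v^4 + (1627/10)*v^5 + (2131/12)*v^6 + (2761/21)*v^7 + (3601/56)*v^8 + (4861/252)*v^9 + (7381/2520)*v^10 + (1/11)*v^11) / (1 + v) ^ 10) := by
    field_simp
  have hmono : (1 + v) * (1 - (1*v + (19/2)*v^2 + (121/3)*v^3 + (1207/12)*v^4 + (1627/10)*v^5 + (2131/12)*v^6 + (2761/21)*v^7 + (3601/56)*v^8 + (4861/252)*v^9 + (7381/2520)*v^10 + (1/11)*v^11) / (1 + v) ^ 10) ≤ (1 + v) * (1 - Real.log (1 + v)) := by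
    apply mul_le_mul_of_nonneg_left _ hu.le
    linarith [hW]
  calc (1 - s) * (1 - Real.log (1 - s)) ≤ (1 + (-1/2)*s^2 + (-1/6)*s^3 + (-1/12)*s^4 + (-1/20)*s^5 + (-1/30)*s^6 + (-1/42)*s^7 + (-1/56)*s^8 + (-1/72)*s^9) := hE
    _ ≤ (1 + v) - (1*v + (19/2)*v^2 + (121/3)*v^3 + (1207/12)*v^4 + (1627/10)*v^5 + (2131/12)*v^6 + (2761/21)*v^7 + (3601/56)*v^8 + (4861/252)*v^9 + (7381/2520)*v^10 + (1/11)*v^11) / (1 + v) ^ 9 := hstep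
    _ = (1 + v) * (1 - (1*v + (19/2)*v^2 + (121/3)*v^3 + (1207/12)*v^4 + (1627/10)*v^5 + (2131/12)*v^6 + (2761/21)*v^7 + (3601/56)*v^8 + (4861/252)*v^9 + (7381/2520)*v^10 + (1/11)*v^11) / (1 + v) ^ 10) := hfs
    _ ≤ (1 + v) * (1 - Real.log (1 + v)) := hmono


lemma pair {a c : ℝ} (ha : 0 < a) (hac : a < c)
    (hg : a * (1 - Real.log a) = c * (1 - Real.log c)) :
    a < 1 ∧ 2 + (1-a)^2/3 + (1-a)^3/9 ≤ a + c := by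
  have ha1 : a < 1 := by
    by_contra h
    push_neg at h
    have := g_anti h hac
    linarith
  have hc1 : 1 < c := by
    by_contra h
    push_neg at h
    have := g_mono ha hac h
    linarith
  refine ⟨ha1, ?_⟩
  have h0s : 0 ≤ 1 - a := by linarith
  have h1s : 1 - a < 1 := by linarith
  have hm := master h0s h1s
  rw [show (1:ℝ) - (1 - a) = a by ring] at hm
  have hvc : 1 + ((1-a) + (1-a)^2/3 + (1-a)^3/9) ≤ c := by
    by_contra hlt
    push_neg at hlt
    have := g_anti hc1.le hlt
    linarith
  linarith

lemma pair_gt_two {a c : ℝ} (ha : 0 < a) (hc : 0 < c) (hne : a ≠ c)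
    (hg : a * (1 - Real.log a) = c * (1 - Real.log c)) : 2 < a + c := by
  rcases hne.lt_or_gt with h | h
  · obtain ⟨ha1, hs⟩ := pair ha h hg
    nlinarith [pow_pos (show (0:ℝ) < 1 - a by linarith) 2, pow_pos (show (0:ℝ) < 1 - a by linarith) 3]
  · obtain ⟨hc1, hs⟩ := pair hc h hg.symm
    nlinarith [pow_pos (show (0:ℝ) < 1 - c by linarith) 2, pow_pos (show (0:ℝ) < 1 - c by linarith) 3]

lemma caseA {a b c d : ℝ} (hb : 0 < b)
    (h1 : 2 < a + c) (h2 : 2 < b + d)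
    (E1 : b * (1 - Real.log b) = (2/5)*(c + a) + (1/10)*d + (1/10)*b) : False := by
  have h3 := g_le_one hb
  linarith

set_option maxHeartbeats 1000000 in
lemma caseB' {a c b : ℝ} (ha : 0 < a) (hac : a < c) (hb : 0 < b)
    (hg : a * (1 - Real.log a) = c * (1 - Real.log c))
    (h1 : a * (1 - Real.log a) = (4/5)*b + (1/10)*(a + c))
    (h3 : b * (1 - Real.log b) = (2/5)*(a + c) + (1/5)*b) : False := by
  obtain ⟨ha1, hsum⟩ := pair ha hac hg
  have hplow : (1-a)^2/2 ≤ 1 - a * (1 - Real.log a) := by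
    have := g_quad ha ha1
    linarith
  have hpup : 1 - a * (1 - Real.log a) ≤ (1-a)^2/2 + (1-a)^3/6 + (1-a)^4/3 := by
    have := p_up ha ha1
    linarith
  have hp0 : 0 < 1 - a * (1 - Real.log a) := by
    nlinarith [hplow, pow_pos (show (0:ℝ) < 1 - a by linarith) 2]
  -- abbreviations as plain hypotheses
  set p : ℝ := 1 - a * (1 - Real.log a)
  have hL2 : (2/3)*p - (25/12)*p^2 ≤ (1-a)^2/3 + (1-a)^3/9 := by
    nlinarith [sq_nonneg (p - (1-a)^2/2), mul_nonneg (sq_nonneg (1-a)) (sub_nonneg.2 hplow),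
      pow_nonneg (show (0:ℝ) ≤ 1 - a by linarith) 3,
      pow_nonneg (show (0:ℝ) ≤ 1 - a by linarith) 4, sq_nonneg (1-a)]
  have hS1 : 2 + (2/3)*p - (25/12)*p^2 ≤ a + c := by linarith
  have hS1strict : 2 < a + c := by
    nlinarith [pow_pos (show (0:ℝ) < 1 - a by linarith) 2,
      pow_pos (show (0:ℝ) < 1 - a by linarith) 3]
  have hb1 : (1:ℝ) - b = (5/4)*p + (1/8)*(a + c - 2) := by linarith
  have hblt1 : b < 1 := by nlinarith [hb1, hp0, hS1strict]
  have hq := g_quad hb hblt1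
  nlinarith [hq, h3, hS1, hS1strict, hp0, mul_pos hp0 (show (0:ℝ) < a + c - 2 by linarith),
    sq_nonneg (a + c - 2), hb1]

lemma caseB {a c b : ℝ} (ha : 0 < a) (hc : 0 < c) (hb : 0 < b) (hne : a ≠ c)
    (hg : a * (1 - Real.log a) = c * (1 - Real.log c))
    (h1 : a * (1 - Real.log a) = (4/5)*b + (1/10)*(a + c))
    (h3 : b * (1 - Real.log b) = (2/5)*(a + c) + (1/5)*b) : False := by
  rcases hne.lt_or_gt with h | h
  · exact caseB' ha h hb hg h1 h3
  · refine caseB' hc h hb hg.symm ?_ ?_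
    · linear_combination h1 - hg
    · linear_combination h3



set_option maxHeartbeats 1000000 in
/-- the KKT system for the LSI on `ℤ_4` with weight `φ_4 = (0,1,8/5,1)`
has no solution in the region where some opposite pair is unequal
(`λ_{j₀} ≠ λ_{j₀+2}` for some `j₀ ∈ {0,1}`; indices modulo 4).
(Note `Real.log 0 = 0`, so the convention `x log x = 0` at `x = 0` holds.) -/
theorem kkt_Z4_opposite_unequal :
    ¬ ∃ (l ν : ZMod 4 → ℝ),
      (∀ j, 0 ≤ l j) ∧ (∀ j, 0 ≤ ν j) ∧
      (l 0 ≠ l 2 ∨ l 1 ≠ l 3) ∧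
      (∀ j : ZMod 4,
        -(l j * Real.log (l j)) + (9/10 : ℝ) * l j
          - (2/5 : ℝ) * (l (j+1) + l (j+3)) - (1/10 : ℝ) * l (j+2) - ν j = 0) ∧
      (0 < ∑ k : ZMod 4, l k ^ 2) ∧ ((∑ k : ZMod 4, l k ^ 2) < 4) ∧
      (∀ j, l j * ν j = 0) := by
  rintro ⟨l, ν, hl, hν, hne, heq, hpos, -, hcs⟩
  have hsum : (∑ k : ZMod 4, l k ^ 2) = l 0 ^ 2 + l 1 ^ 2 + l 2 ^ 2 + l 3 ^ 2 := by
    show (∑ k : Fin 4, l k ^ 2) = _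
    rw [Fin.sum_univ_four]; rfl
  rw [hsum] at hpos
  have e0 := heq 0
  have e1 := heq 1
  have e2 := heq 2
  have e3 := heq 3
  rw [show (0:ZMod 4)+1 = 1 by decide, show (0:ZMod 4)+3 = 3 by decide,
    show (0:ZMod 4)+2 = 2 by decide] at e0
  rw [show (1:ZMod 4)+1 = 2 by decide, show (1:ZMod 4)+3 = 0 by decide,
    show (1:ZMod 4)+2 = 3 by decide] at e1
  rw [show (2:ZMod 4)+1 = 3 by decide, show (2:ZMod 4)+3 = 1 by decide,
    show (2:ZMod 4)+2 = 0 by decide] at e2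
  rw [show (3:ZMod 4)+1 = 0 by decide, show (3:ZMod 4)+3 = 2 by decide,
    show (3:ZMod 4)+2 = 1 by decide] at e3
  -- if any coordinate vanishes, its equation forces the other three to vanish
  have hz : ∀ x y z w nx : ℝ, 0 ≤ y → 0 ≤ z → 0 ≤ w → 0 ≤ nx → x = 0 →
      (-(x * Real.log x) + (9/10 : ℝ) * x - (2/5 : ℝ) * (y + w) - (1/10 : ℝ) * z - nx = 0) →
      y = 0 ∧ z = 0 ∧ w = 0 := by
    intro x y z w nx hy hz' hw hnx hx0 hE
    subst hx0
    rw [Real.log_zero] at hE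
    refine ⟨by linarith, by linarith, by linarith⟩
  have hp0 : 0 < l 0 := by
    rcases (hl 0).lt_or_eq with h | h
    · exact h
    · obtain ⟨hy, hz', hw⟩ := hz (l 0) (l 1) (l 2) (l 3) (ν 0) (hl 1) (hl 2) (hl 3) (hν 0) h.symm e0
      rw [← h] at hpos
      rw [hy, hz', hw] at hpos
      norm_num at hpos
  have hp1 : 0 < l 1 := by
    rcases (hl 1).lt_or_eq with h | h
    · exact h
    · obtain ⟨hy, hz', hw⟩ := hz (l 1) (l 2) (l 3) (l 0) (ν 1) (hl 2) (hl 3) (hl 0) (hν 1) h.symm e1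
      exact absurd hw hp0.ne'
  have hp2 : 0 < l 2 := by
    rcases (hl 2).lt_or_eq with h | h
    · exact h
    · obtain ⟨hy, hz', hw⟩ := hz (l 2) (l 3) (l 0) (l 1) (ν 2) (hl 3) (hl 0) (hl 1) (hν 2) h.symm e2
      exact absurd hz' hp0.ne'
  have hp3 : 0 < l 3 := by
    rcases (hl 3).lt_or_eq with h | h
    · exact h
    · obtain ⟨hy, hz', hw⟩ := hz (l 3) (l 0) (l 1) (l 2) (ν 3) (hl 0) (hl 1) (hl 2) (hν 3) h.symm e3
      exact absurd hy hp0.ne'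
  -- slackness kills the multipliers
  have hn : ∀ j, 0 < l j → ν j = 0 := by
    intro j hj
    rcases mul_eq_zero.1 (hcs j) with h | h
    · exact absurd h hj.ne'
    · exact h
  have hn0 := hn 0 hp0
  have hn1 := hn 1 hp1
  have hn2 := hn 2 hp2
  have hn3 := hn 3 hp3
  rw [hn0] at e0; rw [hn1] at e1; rw [hn2] at e2; rw [hn3] at e3
  -- equations in g-form
  have E0 : l 0 * (1 - Real.log (l 0))
      = (2/5)*(l 1 + l 3) + (1/10)*(l 2) + (1/10)*(l 0) := by linear_combination e0
  have E1 : l 1 * (1 - Real.log (l 1))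
      = (2/5)*(l 2 + l 0) + (1/10)*(l 3) + (1/10)*(l 1) := by linear_combination e1
  have E2 : l 2 * (1 - Real.log (l 2))
      = (2/5)*(l 3 + l 1) + (1/10)*(l 0) + (1/10)*(l 2) := by linear_combination e2
  have E3 : l 3 * (1 - Real.log (l 3))
      = (2/5)*(l 0 + l 2) + (1/10)*(l 1) + (1/10)*(l 3) := by linear_combination e3
  have hg02 : l 0 * (1 - Real.log (l 0)) = l 2 * (1 - Real.log (l 2)) := by
    linear_combination E0 - E2
  have hg13 : l 1 * (1 - Real.log (l 1)) = l 3 * (1 - Real.log (l 3)) := by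
    linear_combination E1 - E3
  rcases hne with hac | hbd
  · by_cases hbd' : l 1 = l 3
    · exact caseB hp0 hp2 hp1 hac hg02
        (by linear_combination E0 - (2/5)*hbd') (by linear_combination E1 - (1/10)*hbd')
    · exact caseA hp1 (pair_gt_two hp0 hp2 hac hg02) (pair_gt_two hp1 hp3 hbd' hg13) E1
  · by_cases hac' : l 0 = l 2
    · exact caseB hp1 hp3 hp0 hbd hg13
        (by linear_combination E1 - (2/5)*hac') (by linear_combination E0 - (1/10)*hac')
    · exact caseA hp0 (pair_gt_two hp1 hp3 hbd hg13) (pair_gt_two hp0 hp2 hac' hg02) (by linear_combination E0)
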